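/- Let 0<q<∞ and let φ:(0,∞)→[0,∞) satisfy φ(t₀)≠0 for some t₀>0. Then the following three statements are equivalent: (a) every essentially bounded compactly supported measurable function f:ℝⁿ→ℂ satisfies ‖f‖_{M^φ_q} < ∞; (b) there exists a measurable function f with ‖f‖_{M^φ_q} < ∞ and f not equal to 0 almost everywhere; (c) sup_{t>0} φ(t)·min(t^{−n/q},1) < ∞. -/

import Mathlib

open MeasureTheory Set
open scoped ENNReal NNReal
open Metric

private lemma real_key {r₀ t a : ℝ} (hr₀ : 1 ≤ r₀) (ht : 0 < t) (ha : 0 ≤ a) :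
    (r₀ + t) ^ a * min (t ^ (-a)) 1 ≤ (r₀ + 1) ^ a := by
  rcases le_total t 1 with h | h
  · calc (r₀ + t) ^ a * min (t ^ (-a)) 1 ≤ (r₀ + t) ^ a * 1 :=
        mul_le_mul_of_nonneg_left (min_le_right _ _) (Real.rpow_nonneg (by linarith) _)
    _ = (r₀ + t) ^ a := mul_one _
    _ ≤ (r₀ + 1) ^ a := Real.rpow_le_rpow (by linarith) (by linarith) ha
  · have htpos : (0:ℝ) < t := ht
    calc (r₀ + t) ^ a * min (t ^ (-a)) 1 ≤ (r₀ + t) ^ a * t ^ (-a) :=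
        mul_le_mul_of_nonneg_left (min_le_left _ _) (Real.rpow_nonneg (by linarith) _)
    _ = ((r₀ + t) * t⁻¹) ^ a := by
        rw [Real.rpow_neg ht.le, ← Real.inv_rpow ht.le,
          ← Real.mul_rpow (by linarith) (inv_nonneg.2 ht.le)]
    _ ≤ (r₀ + 1) ^ a := by
        refine Real.rpow_le_rpow (by positivity) ?_ ha
        rw [mul_inv_le_iff₀ ht]
        nlinarith

private lemma real_aux (n : ℕ) {q r₀ t : ℝ} (hq : 0 < q) (hr₀ : 1 ≤ r₀) (ht : 0 < t) :
    ((r₀ + t) ^ n) ^ (1/q) * min (t ^ (-((n:ℝ)/q))) 1 ≤ ((r₀ + 1) ^ n) ^ (1/q) := by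
  have h1 : ((r₀ + t) ^ n : ℝ) ^ (1/q) = (r₀ + t) ^ ((n:ℝ)/q) := by
    rw [← Real.rpow_natCast (r₀ + t) n, ← Real.rpow_mul (by linarith), mul_one_div]
  have h2 : ((r₀ + 1) ^ n : ℝ) ^ (1/q) = (r₀ + 1) ^ ((n:ℝ)/q) := by
    rw [← Real.rpow_natCast (r₀ + 1) n, ← Real.rpow_mul (by linarith), mul_one_div]
  rw [h1, h2]
  exact real_key hr₀ ht (by positivity)

private lemma real_aux2 (n : ℕ) {q C R r : ℝ} (hq : 0 < q) (hR : 1 ≤ R) (hr : 0 < r)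
    {φr : ℝ} (hφr : 0 ≤ φr) (h : φr * min (r ^ (-((n:ℝ)/q))) 1 ≤ C) :
    φr * min 1 (((R/r) ^ n) ^ (1/q)) ≤ max C 0 * ((R ^ n) ^ (1/q)) := by
  have hRq : ((R ^ n : ℝ)) ^ (1/q) = R ^ ((n:ℝ)/q) := by
    rw [← Real.rpow_natCast R n, ← Real.rpow_mul (by linarith), mul_one_div]
  have hRr : (((R/r) ^ n : ℝ)) ^ (1/q) = R ^ ((n:ℝ)/q) * r ^ (-((n:ℝ)/q)) := by
    rw [← Real.rpow_natCast (R/r) n, ← Real.rpow_mul (by positivity), mul_one_div,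
      Real.div_rpow (by linarith) hr.le, Real.rpow_neg hr.le, div_eq_mul_inv]
  set a : ℝ := (n:ℝ)/q with ha
  have hR1 : (1:ℝ) ≤ R ^ a := Real.one_le_rpow hR (by positivity)
  have hX : (0:ℝ) ≤ R ^ a := by positivity
  rw [hRq, hRr]
  have key : min 1 (R ^ a * r ^ (-a)) ≤ R ^ a * min (r ^ (-a)) 1 := by
    rcases le_total (r ^ (-a)) 1 with hm | hm
    · rw [min_eq_left hm]; exact min_le_right _ _
    · rw [min_eq_right hm]
      calc min (1:ℝ) (R ^ a * r ^ (-a)) ≤ 1 := min_le_left _ _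
      _ ≤ R ^ a * 1 := by rw [mul_one]; exact hR1
  calc φr * min 1 (R ^ a * r ^ (-a)) ≤ φr * (R ^ a * min (r ^ (-a)) 1) :=
      mul_le_mul_of_nonneg_left key hφr
  _ = R ^ a * (φr * min (r ^ (-a)) 1) := by ring
  _ ≤ R ^ a * max C 0 := by
      refine mul_le_mul_of_nonneg_left (h.trans (le_max_left _ _)) hX
  _ = max C 0 * R ^ a := mul_comm _ _

/-- The generalized Morrey norm `‖f‖_{M^φ_q}` on `ℝⁿ` (cubes realized as closed balls
for the sup metric on `Fin n → ℝ`). -/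
noncomputable def morreyNorm (n : ℕ) (q : ℝ) (φ : ℝ → ℝ)
    (f : (Fin n → ℝ) → ℂ) : ℝ≥0∞ :=
  ⨆ (x : Fin n → ℝ) (r : ℝ) (_ : 0 < r),
    ENNReal.ofReal (φ r) *
      ((volume (Metric.closedBall x r))⁻¹ *
        ∫⁻ y in Metric.closedBall x r, (‖f y‖₊ : ℝ≥0∞) ^ q) ^ (1 / q)


private lemma emul_min (c a b : ℝ≥0∞) : c * min a b = min (c * a) (c * b) := by
  rcases le_total a b with h | h
  · rw [min_eq_left h, min_eq_left (mul_le_mul_right h c)]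
  · rw [min_eq_right h, min_eq_right (mul_le_mul_right h c)]

private lemma ermin_rpow (a b : ℝ≥0∞) {p : ℝ} (hp : 0 ≤ p) :
    min a b ^ p = min (a ^ p) (b ^ p) := by
  rcases le_total a b with h | h
  · rw [min_eq_left h, min_eq_left (ENNReal.rpow_le_rpow h hp)]
  · rw [min_eq_right h, min_eq_right (ENNReal.rpow_le_rpow h hp)]

private lemma vol_cb (n : ℕ) (x : Fin n → ℝ) {r : ℝ} (hr : 0 ≤ r) :
    volume (closedBall x r) =
      ENNReal.ofReal (r ^ n) * volume (ball (0 : Fin n → ℝ) 1) := by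
  rw [Measure.addHaar_closedBall _ _ hr, Module.finrank_pi]
  simp

private lemma term_le_morrey (n : ℕ) (q : ℝ) (φ : ℝ → ℝ) (f : (Fin n → ℝ) → ℂ)
    (x : Fin n → ℝ) {r : ℝ} (hr : 0 < r) :
    ENNReal.ofReal (φ r) *
      ((volume (Metric.closedBall x r))⁻¹ *
        ∫⁻ y in Metric.closedBall x r, (‖f y‖₊ : ℝ≥0∞) ^ q) ^ (1 / q) ≤
      morreyNorm n q φ f :=
  le_iSup_of_le x (le_iSup_of_le r (le_iSup_of_le hr le_rfl))

private lemma morrey_exists_bound (n : ℕ) {q : ℝ} (hq : 0 < q) {φ : ℝ → ℝ}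
    (hφ0 : ∀ t, 0 < t → 0 ≤ φ t)
    {f : (Fin n → ℝ) → ℂ} (hf : Measurable f) (hM : morreyNorm n q φ f < ⊤)
    (hne : ¬ (f =ᵐ[volume] 0)) :
    ∃ C : ℝ, ∀ t, 0 < t → φ t * min (t ^ (-((n : ℝ) / q))) 1 ≤ C := by
  set M := morreyNorm n q φ f with hMdef
  have hMtop : M ≠ ⊤ := hM.ne
  set w : (Fin n → ℝ) → ℝ≥0∞ := fun y => min ((‖f y‖₊ : ℝ≥0∞) ^ q) 1 with hw
  have hwmeas : Measurable w :=
    (ENNReal.continuous_rpow_const.measurable.comp hf.nnnorm.coe_nnreal_ennreal).min measurable_const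
  -- find a ball where f is nonzero on positive measure
  have hK : ∃ k : ℕ, volume ({y | f y ≠ 0} ∩ closedBall (0 : Fin n → ℝ) ((k:ℝ)+1)) ≠ 0 := by
    by_contra hcon
    push_neg at hcon
    apply hne
    have hsub : {y | f y ≠ 0} ⊆
        ⋃ k : ℕ, ({y | f y ≠ 0} ∩ closedBall (0 : Fin n → ℝ) ((k:ℝ)+1)) := by
      intro y hy
      obtain ⟨k, hk⟩ := exists_nat_ge (dist y 0)
      exact mem_iUnion.2 ⟨k, hy, mem_closedBall.2 (hk.trans (by linarith))⟩
    rw [Filter.EventuallyEq, ae_iff]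
    simpa using le_antisymm ((measure_mono hsub).trans (measure_iUnion_null hcon).le)
      zero_le
  obtain ⟨k, hk⟩ := hK
  set r₀ : ℝ := (k:ℝ) + 1 with hr₀def
  have hr₀ : 1 ≤ r₀ := le_add_of_nonneg_left (Nat.cast_nonneg k)
  set Q₀ := closedBall (0 : Fin n → ℝ) r₀ with hQ₀
  set B := ∫⁻ y in Q₀, w y with hB
  set I₁ := volume (ball (0 : Fin n → ℝ) 1) with hI₁
  have hI₁0 : I₁ ≠ 0 := (measure_ball_pos _ _ one_pos).ne'
  have hI₁top : I₁ ≠ ⊤ := measure_ball_lt_top.ne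
  have hB0 : B ≠ 0 := by
    intro h0
    have h1 := (lintegral_eq_zero_iff hwmeas).1 h0
    rw [Filter.EventuallyEq, ae_restrict_iff' measurableSet_closedBall] at h1
    rw [ae_iff] at h1
    apply hk
    refine measure_mono_null ?_ h1
    rintro y ⟨hy1, hy2⟩
    simp only [mem_setOf_eq, Classical.not_imp]
    refine ⟨hy2, ?_⟩
    have hpos : 0 < (‖f y‖₊ : ℝ≥0∞) ^ q := by
      refine ENNReal.rpow_pos ?_ ENNReal.coe_ne_top
      simpa using hy1
    exact (lt_min hpos one_pos).ne'
  have hBtop : B ≠ ⊤ := by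
    refine ((lintegral_mono fun y => min_le_right _ _).trans_lt ?_).ne
    rw [lintegral_one, Measure.restrict_apply_univ]
    exact measure_closedBall_lt_top
  set K : ℝ≥0∞ := M * I₁ ^ (1/q) * (B ^ (1/q))⁻¹ *
      ENNReal.ofReal (((r₀+1)^n) ^ (1/q)) with hKdef
  have hBq0 : B ^ (1/q) ≠ 0 := (ENNReal.rpow_pos (pos_iff_ne_zero.2 hB0) hBtop).ne'
  have hBqtop : B ^ (1/q) ≠ ⊤ := ENNReal.rpow_ne_top_of_nonneg (by positivity) hBtop
  have hKtop : K ≠ ⊤ :=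
    ENNReal.mul_ne_top (ENNReal.mul_ne_top (ENNReal.mul_ne_top hMtop
      (ENNReal.rpow_ne_top_of_nonneg (by positivity) hI₁top)) (ENNReal.inv_ne_top.2 hBq0))
      ENNReal.ofReal_ne_top
  refine ⟨K.toReal, fun t ht => ?_⟩
  rw [← ENNReal.ofReal_le_iff_le_toReal hKtop]
  by_cases hφt : φ t = 0
  · simp [hφt]
  have hφtpos : 0 < φ t := lt_of_le_of_ne (hφ0 t ht) (Ne.symm hφt)
  set p := ENNReal.ofReal (φ t) with hp
  have hp0 : p ≠ 0 := (ENNReal.ofReal_pos.2 hφtpos).ne'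
  have hptop : p ≠ ⊤ := ENNReal.ofReal_ne_top
  set νt := volume (closedBall (0 : Fin n → ℝ) t) with hνt
  have hνt0 : νt ≠ 0 := (measure_closedBall_pos _ _ ht).ne'
  have hνttop : νt ≠ ⊤ := measure_closedBall_lt_top.ne
  have key : ∀ v : Fin n → ℝ,
      (∫⁻ y in closedBall v t, Q₀.indicator w y) ≤ νt * (M / p) ^ q := by
    intro v
    have h1 : p * ((νt)⁻¹ * ∫⁻ y in closedBall v t, Q₀.indicator w y) ^ (1/q) ≤ M := by
      refine le_trans ?_ (term_le_morrey n q φ f v ht)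
      rw [Measure.addHaar_closedBall_center volume v t, ← hνt]
      refine mul_le_mul_right (ENNReal.rpow_le_rpow (mul_le_mul_right ?_ _) (by positivity)) _
      refine lintegral_mono fun y => ?_
      exact le_trans (Set.indicator_le_self _ _ _) (min_le_left _ _)
    have h2 : ((νt)⁻¹ * ∫⁻ y in closedBall v t, Q₀.indicator w y) ^ (1/q) ≤ M / p := by
      rw [ENNReal.le_div_iff_mul_le (Or.inl hp0) (Or.inl hptop), mul_comm]
      exact h1
    have h3 := ENNReal.rpow_le_rpow h2 hq.le
    rw [← ENNReal.rpow_mul, one_div_mul_cancel hq.ne', ENNReal.rpow_one] at h3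
    have h4 := mul_le_mul_right h3 νt
    rwa [← mul_assoc, ENNReal.mul_inv_cancel hνt0 hνttop, one_mul] at h4
  have hind : Measurable (Q₀.indicator w) := hwmeas.indicator measurableSet_closedBall
  have hSmeas : MeasurableSet {pp : (Fin n → ℝ) × (Fin n → ℝ) | dist pp.1 pp.2 ≤ t} :=
    measurableSet_le measurable_dist measurable_const
  have fub : (∫⁻ v, ∫⁻ y in closedBall v t, Q₀.indicator w y) = νt * B := by
    have step1 : ∀ v : Fin n → ℝ, (∫⁻ y in closedBall v t, Q₀.indicator w y)
        = ∫⁻ y, Q₀.indicator w y *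
            ({pp : (Fin n → ℝ) × (Fin n → ℝ) | dist pp.1 pp.2 ≤ t}.indicator 1 (v, y)) := by
      intro v
      rw [← lintegral_indicator measurableSet_closedBall]
      refine lintegral_congr fun y => ?_
      have hmem : (v, y) ∈ {pp : (Fin n → ℝ) × (Fin n → ℝ) | dist pp.1 pp.2 ≤ t} ↔
          y ∈ closedBall v t := by
        simp [mem_closedBall, dist_comm]
      by_cases hy : y ∈ closedBall v t
      · have hSval : ({pp : (Fin n → ℝ) × (Fin n → ℝ) | dist pp.1 pp.2 ≤ t}.indicator
            (1 : (Fin n → ℝ) × (Fin n → ℝ) → ℝ≥0∞) (v, y)) = 1 :=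
          Set.indicator_of_mem (hmem.2 hy) _
        rw [hSval, mul_one, Set.indicator_of_mem hy]
      · have hSval : ({pp : (Fin n → ℝ) × (Fin n → ℝ) | dist pp.1 pp.2 ≤ t}.indicator
            (1 : (Fin n → ℝ) × (Fin n → ℝ) → ℝ≥0∞) (v, y)) = 0 :=
          Set.indicator_of_notMem (fun c => hy (hmem.1 c)) _
        rw [hSval, mul_zero, Set.indicator_of_notMem hy]
    calc (∫⁻ v, ∫⁻ y in closedBall v t, Q₀.indicator w y)
        = ∫⁻ v, ∫⁻ y, Q₀.indicator w y *
            ({pp : (Fin n → ℝ) × (Fin n → ℝ) | dist pp.1 pp.2 ≤ t}.indicator 1 (v, y)) :=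
          lintegral_congr step1
      _ = ∫⁻ y, ∫⁻ v, Q₀.indicator w y *
            ({pp : (Fin n → ℝ) × (Fin n → ℝ) | dist pp.1 pp.2 ≤ t}.indicator 1 (v, y)) :=
          lintegral_lintegral_swap
            (((hind.comp measurable_snd).mul (measurable_const.indicator hSmeas)).aemeasurable)
      _ = ∫⁻ y, Q₀.indicator w y * νt := by
          refine lintegral_congr fun y => ?_
          have hg : Measurable ({pp : (Fin n → ℝ) × (Fin n → ℝ) | dist pp.1 pp.2 ≤ t}.indicator
              (1 : (Fin n → ℝ) × (Fin n → ℝ) → ℝ≥0∞)) := measurable_const.indicator hSmeas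
          have hmv : Measurable fun v : Fin n → ℝ =>
              ({pp : (Fin n → ℝ) × (Fin n → ℝ) | dist pp.1 pp.2 ≤ t}.indicator 1 (v, y)) :=
            hg.comp measurable_prodMk_right
          rw [lintegral_const_mul _ hmv]
          congr 1
          have heq : (fun v : Fin n → ℝ =>
              ({pp : (Fin n → ℝ) × (Fin n → ℝ) | dist pp.1 pp.2 ≤ t}.indicator 1 (v, y)))
              = (closedBall y t).indicator (fun _ => (1:ℝ≥0∞)) := by
            funext v
            by_cases hv : dist v y ≤ t <;>
              simp [Set.indicator_apply, hv, Metric.mem_closedBall]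
          rw [heq, lintegral_indicator_const measurableSet_closedBall, one_mul,
            Measure.addHaar_closedBall_center volume y t, ← hνt]
      _ = νt * B := by
          rw [lintegral_mul_const _ hind, hB, ← lintegral_indicator measurableSet_closedBall,
            mul_comm]
  have hsupp : ∀ v : Fin n → ℝ, v ∉ closedBall (0 : Fin n → ℝ) (r₀ + t) →
      (∫⁻ y in closedBall v t, Q₀.indicator w y) = 0 := by
    intro v hv
    have hz : ∀ y ∈ closedBall v t, Q₀.indicator w y = 0 := by
      intro y hy
      refine Set.indicator_of_notMem (fun hyQ => hv ?_) _
      rw [mem_closedBall] at hy hyQ ⊢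
      calc dist v 0 ≤ dist v y + dist y 0 := dist_triangle _ _ _
        _ ≤ t + r₀ := add_le_add (by rwa [dist_comm] at hy) hyQ
        _ = r₀ + t := add_comm _ _
    calc (∫⁻ y in closedBall v t, Q₀.indicator w y)
        = ∫⁻ _ in closedBall v t, 0 :=
          setLIntegral_congr_fun measurableSet_closedBall hz
      _ = 0 := lintegral_zero
  have big : νt * B ≤ νt * ((M / p) ^ q * volume (closedBall (0 : Fin n → ℝ) (r₀ + t))) := by
    rw [← fub]
    have hle : ∀ v, (∫⁻ y in closedBall v t, Q₀.indicator w y) ≤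
        (closedBall (0 : Fin n → ℝ) (r₀ + t)).indicator (fun _ => νt * (M / p) ^ q) v := by
      intro v
      by_cases hv : v ∈ closedBall (0 : Fin n → ℝ) (r₀ + t)
      · rw [Set.indicator_of_mem hv]; exact key v
      · rw [Set.indicator_of_notMem hv, hsupp v hv]
    calc (∫⁻ v, ∫⁻ y in closedBall v t, Q₀.indicator w y) ≤ _ := lintegral_mono hle
      _ = νt * (M / p) ^ q * volume (closedBall (0 : Fin n → ℝ) (r₀ + t)) :=
          lintegral_indicator_const measurableSet_closedBall _
      _ = νt * ((M / p) ^ q * volume (closedBall (0 : Fin n → ℝ) (r₀ + t))) :=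
          mul_assoc _ _ _
  have hcanc : B ≤ (M / p) ^ q * volume (closedBall (0 : Fin n → ℝ) (r₀ + t)) :=
    (ENNReal.mul_le_mul_iff_right hνt0 hνttop).1 big
  have h5 : B ^ (1/q) ≤ M / p * (ENNReal.ofReal (((r₀+t)^n) ^ (1/q)) * I₁ ^ (1/q)) := by
    refine le_trans (ENNReal.rpow_le_rpow hcanc (by positivity)) ?_
    rw [vol_cb n _ (by linarith : (0:ℝ) ≤ r₀ + t), ← hI₁,
      ENNReal.mul_rpow_of_nonneg _ _ (by positivity),
      ENNReal.mul_rpow_of_nonneg _ _ (by positivity),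
      ← ENNReal.rpow_mul, mul_one_div_cancel hq.ne', ENNReal.rpow_one,
      ← ENNReal.ofReal_rpow_of_nonneg (by positivity : (0:ℝ) ≤ (r₀+t)^n) (by positivity : (0:ℝ) ≤ 1/q)]
  have h6 : p * B ^ (1/q) ≤
      M * (ENNReal.ofReal (((r₀+t)^n) ^ (1/q)) * I₁ ^ (1/q)) := by
    calc p * B ^ (1/q)
        ≤ p * (M / p * (ENNReal.ofReal (((r₀+t)^n) ^ (1/q)) * I₁ ^ (1/q))) :=
          mul_le_mul_right h5 p
      _ = p * (M / p) * (ENNReal.ofReal (((r₀+t)^n) ^ (1/q)) * I₁ ^ (1/q)) :=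
          (mul_assoc _ _ _).symm
      _ ≤ M * (ENNReal.ofReal (((r₀+t)^n) ^ (1/q)) * I₁ ^ (1/q)) :=
          mul_le_mul_left ENNReal.mul_div_le _
  have h7 : p ≤ M * I₁ ^ (1/q) * (B ^ (1/q))⁻¹ * ENNReal.ofReal (((r₀+t)^n) ^ (1/q)) := by
    have h := (ENNReal.le_div_iff_mul_le (Or.inl hBq0) (Or.inl hBqtop)).2 h6
    rw [div_eq_mul_inv] at h
    calc p ≤ M * (ENNReal.ofReal (((r₀+t)^n) ^ (1/q)) * I₁ ^ (1/q)) * (B ^ (1/q))⁻¹ := h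
      _ = M * I₁ ^ (1/q) * (B ^ (1/q))⁻¹ * ENNReal.ofReal (((r₀+t)^n) ^ (1/q)) := by ring
  calc ENNReal.ofReal (φ t * min (t ^ (-((n:ℝ)/q))) 1)
      = p * ENNReal.ofReal (min (t ^ (-((n:ℝ)/q))) 1) := by
        rw [hp, ← ENNReal.ofReal_mul (hφ0 t ht)]
    _ ≤ (M * I₁ ^ (1/q) * (B ^ (1/q))⁻¹ * ENNReal.ofReal (((r₀+t)^n) ^ (1/q))) *
        ENNReal.ofReal (min (t ^ (-((n:ℝ)/q))) 1) := mul_le_mul_left h7 _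
    _ = M * I₁ ^ (1/q) * (B ^ (1/q))⁻¹ *
        ENNReal.ofReal (((r₀+t)^n) ^ (1/q) * min (t ^ (-((n:ℝ)/q))) 1) := by
        rw [mul_assoc, ← ENNReal.ofReal_mul (by positivity)]
    _ ≤ K := by
        rw [hKdef]
        exact mul_le_mul_right (ENNReal.ofReal_le_ofReal (real_aux n hq hr₀ ht)) _

private lemma eofReal_min (a b : ℝ) :
    ENNReal.ofReal (min a b) = min (ENNReal.ofReal a) (ENNReal.ofReal b) := by
  rcases le_total a b with h | h
  · rw [min_eq_left h, min_eq_left (ENNReal.ofReal_le_ofReal h)]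
  · rw [min_eq_right h, min_eq_right (ENNReal.ofReal_le_ofReal h)]

private lemma morrey_lt_top_of_bound (n : ℕ) {q : ℝ} (hq : 0 < q) {φ : ℝ → ℝ}
    (hφ0 : ∀ t, 0 < t → 0 ≤ φ t) {C : ℝ}
    (hC : ∀ t, 0 < t → φ t * min (t ^ (-((n : ℝ) / q))) 1 ≤ C)
    {f : (Fin n → ℝ) → ℂ} (hf : Measurable f) (hcs : HasCompactSupport f)
    {D : ℝ} (hD : ∀ᵐ x ∂volume, ‖f x‖ ≤ D) :
    morreyNorm n q φ f < ⊤ := by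
  set I₁ := volume (ball (0 : Fin n → ℝ) 1) with hI₁
  have hI₁0 : I₁ ≠ 0 := (measure_ball_pos _ _ one_pos).ne'
  have hI₁top : I₁ ≠ ⊤ := measure_ball_lt_top.ne
  set D' : ℝ := max D 0 with hD'def
  have hD'0 : (0:ℝ) ≤ D' := le_max_right _ _
  have hD' : ∀ᵐ x ∂volume, ‖f x‖ ≤ D' := hD.mono fun x h => h.trans (le_max_left _ _)
  obtain ⟨R₁, hR₁⟩ := hcs.isBounded.subset_closedBall (0 : Fin n → ℝ)
  set R := max R₁ 1 with hRdef
  have hR1 : (1:ℝ) ≤ R := le_max_right _ _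
  have hRsub : tsupport f ⊆ closedBall 0 R :=
    hR₁.trans (closedBall_subset_closedBall (le_max_left _ _))
  have hpt : ∀ᵐ y ∂volume, (‖f y‖₊ : ℝ≥0∞) ^ q ≤
      (closedBall (0 : Fin n → ℝ) R).indicator (fun _ => ENNReal.ofReal (D' ^ q)) y := by
    refine hD'.mono fun y hy => ?_
    by_cases hmem : y ∈ closedBall (0 : Fin n → ℝ) R
    · have hcoe : ((‖f y‖₊ : ℝ≥0∞)) ^ q = ENNReal.ofReal (‖f y‖ ^ q) := by
        rw [← enorm_eq_nnnorm, ← ofReal_norm]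
        exact ENNReal.ofReal_rpow_of_nonneg (norm_nonneg _) hq.le
      rw [Set.indicator_of_mem hmem, hcoe]
      exact ENNReal.ofReal_le_ofReal (Real.rpow_le_rpow (norm_nonneg _) hy hq.le)
    · rw [Set.indicator_of_notMem hmem]
      have hf0 : f y = 0 := image_eq_zero_of_notMem_tsupport fun h => hmem (hRsub h)
      rw [hf0]
      simp [ENNReal.zero_rpow_of_pos hq]
  refine lt_of_le_of_lt
    (iSup_le fun x => iSup_le fun r => iSup_le fun hr =>
      (?_ : _ ≤ ENNReal.ofReal D' * ENNReal.ofReal (max C 0 * ((R ^ n) ^ (1/q)))))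
    (ENNReal.mul_lt_top ENNReal.ofReal_lt_top ENNReal.ofReal_lt_top)
  have hint : (∫⁻ y in closedBall x r, (‖f y‖₊ : ℝ≥0∞) ^ q) ≤
      ENNReal.ofReal (D' ^ q) *
        min (volume (closedBall (0 : Fin n → ℝ) r))
          (volume (closedBall (0 : Fin n → ℝ) R)) := by
    rw [emul_min]
    refine le_min ?_ ?_
    · calc (∫⁻ y in closedBall x r, (‖f y‖₊ : ℝ≥0∞) ^ q)
          ≤ ∫⁻ y in closedBall x r,
            (closedBall (0 : Fin n → ℝ) R).indicator (fun _ => ENNReal.ofReal (D' ^ q)) y :=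
            lintegral_mono_ae (ae_restrict_of_ae hpt)
        _ ≤ ∫⁻ _ in closedBall x r, ENNReal.ofReal (D' ^ q) :=
            lintegral_mono fun y => Set.indicator_le_self _ _ y
        _ = ENNReal.ofReal (D' ^ q) * volume (closedBall x r) := by
            rw [setLIntegral_const]
        _ = ENNReal.ofReal (D' ^ q) * volume (closedBall (0 : Fin n → ℝ) r) := by
            rw [Measure.addHaar_closedBall_center volume x r]
    · calc (∫⁻ y in closedBall x r, (‖f y‖₊ : ℝ≥0∞) ^ q)
          ≤ ∫⁻ y in closedBall x r,
            (closedBall (0 : Fin n → ℝ) R).indicator (fun _ => ENNReal.ofReal (D' ^ q)) y :=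
            lintegral_mono_ae (ae_restrict_of_ae hpt)
        _ ≤ ∫⁻ y, (closedBall (0 : Fin n → ℝ) R).indicator
              (fun _ => ENNReal.ofReal (D' ^ q)) y :=
            setLIntegral_le_lintegral _ _
        _ = ENNReal.ofReal (D' ^ q) * volume (closedBall (0 : Fin n → ℝ) R) :=
            lintegral_indicator_const measurableSet_closedBall _
  have hratio : (volume (closedBall (0 : Fin n → ℝ) r))⁻¹ *
      volume (closedBall (0 : Fin n → ℝ) R) = ENNReal.ofReal ((R/r)^n) := by
    rw [vol_cb n _ hr.le, vol_cb n _ (by linarith : (0:ℝ) ≤ R), ← hI₁,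
      ENNReal.mul_inv (Or.inl (by simp [ENNReal.ofReal_eq_zero, not_le]; positivity))
        (Or.inl ENNReal.ofReal_ne_top)]
    have : (ENNReal.ofReal (r ^ n))⁻¹ * I₁⁻¹ * (ENNReal.ofReal (R ^ n) * I₁)
        = (ENNReal.ofReal (r ^ n))⁻¹ * ENNReal.ofReal (R ^ n) * (I₁⁻¹ * I₁) := by ring
    rw [this, ENNReal.inv_mul_cancel hI₁0 hI₁top, mul_one, div_pow,
      ENNReal.ofReal_div_of_pos (by positivity), div_eq_mul_inv, mul_comm]
  have hvol0 : volume (closedBall (0 : Fin n → ℝ) r) ≠ 0 := (measure_closedBall_pos _ _ hr).ne'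
  have hvoltop : volume (closedBall (0 : Fin n → ℝ) r) ≠ ⊤ := measure_closedBall_lt_top.ne
  calc ENNReal.ofReal (φ r) *
      ((volume (closedBall x r))⁻¹ * ∫⁻ y in closedBall x r, (‖f y‖₊ : ℝ≥0∞) ^ q) ^ (1/q)
      ≤ ENNReal.ofReal (φ r) *
        ((volume (closedBall (0 : Fin n → ℝ) r))⁻¹ *
          (ENNReal.ofReal (D' ^ q) *
            min (volume (closedBall (0 : Fin n → ℝ) r))
              (volume (closedBall (0 : Fin n → ℝ) R)))) ^ (1/q) := by
        rw [Measure.addHaar_closedBall_center volume x r]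
        exact mul_le_mul_right
          (ENNReal.rpow_le_rpow (mul_le_mul_right hint _) (by positivity)) _
    _ = ENNReal.ofReal (φ r) *
        (ENNReal.ofReal (D' ^ q) * min 1 (ENNReal.ofReal ((R/r)^n))) ^ (1/q) := by
        congr 2
        rw [show (volume (closedBall (0:Fin n → ℝ) r))⁻¹ * (ENNReal.ofReal (D' ^ q) *
            min (volume (closedBall (0:Fin n → ℝ) r)) (volume (closedBall (0:Fin n → ℝ) R)))
            = ENNReal.ofReal (D' ^ q) * ((volume (closedBall (0:Fin n → ℝ) r))⁻¹ *
              min (volume (closedBall (0:Fin n → ℝ) r)) (volume (closedBall (0:Fin n → ℝ) R)))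
          from by ring, emul_min, ENNReal.inv_mul_cancel hvol0 hvoltop, hratio]
    _ = ENNReal.ofReal (φ r) *
        (ENNReal.ofReal D' * min 1 (ENNReal.ofReal (((R/r)^n) ^ (1/q)))) := by
        have hDq : ((D' ^ q : ℝ)) ^ (1/q) = D' := by
          rw [← Real.rpow_mul hD'0, mul_one_div_cancel hq.ne', Real.rpow_one]
        rw [ENNReal.mul_rpow_of_nonneg _ _ (by positivity), ermin_rpow _ _ (by positivity),
          ENNReal.one_rpow,
          ENNReal.ofReal_rpow_of_nonneg (by positivity : (0:ℝ) ≤ D' ^ q)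
            (by positivity : (0:ℝ) ≤ 1/q),
          ENNReal.ofReal_rpow_of_nonneg (by positivity : (0:ℝ) ≤ (R/r)^n)
            (by positivity : (0:ℝ) ≤ 1/q), hDq]
    _ = ENNReal.ofReal D' * ENNReal.ofReal (φ r * min 1 (((R/r)^n) ^ (1/q))) := by
        rw [ENNReal.ofReal_mul (hφ0 r hr), eofReal_min, ENNReal.ofReal_one]
        ring
    _ ≤ ENNReal.ofReal D' * ENNReal.ofReal (max C 0 * ((R ^ n) ^ (1/q))) :=
        mul_le_mul_right
          (ENNReal.ofReal_le_ofReal (real_aux2 n hq hR1 hr (hφ0 r hr) (hC r hr))) _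

/-- for `0<q<∞` and `φ:(0,∞)→[0,∞)` not identically zero,
the following are equivalent: (a) every essentially bounded compactly supported
measurable function has finite generalized Morrey norm; (b) some measurable
function, not a.e. zero, has finite generalized Morrey norm;
(c) `sup_{t>0} φ(t) min(t^{-n/q},1) < ∞`. -/
theorem morrey_nontrivial_tfae (n : ℕ) (q : ℝ) (hq : 0 < q)
    (φ : ℝ → ℝ) (hφ0 : ∀ t, 0 < t → 0 ≤ φ t)
    (hφ : ∃ t₀, 0 < t₀ ∧ φ t₀ ≠ 0) :
    ((∀ f : (Fin n → ℝ) → ℂ, Measurable f → HasCompactSupport f →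
        (∃ C : ℝ, ∀ᵐ x ∂volume, ‖f x‖ ≤ C) → morreyNorm n q φ f < ⊤) ↔
      (∃ f : (Fin n → ℝ) → ℂ, Measurable f ∧ morreyNorm n q φ f < ⊤ ∧
        ¬ (f =ᵐ[volume] 0))) ∧
    ((∃ f : (Fin n → ℝ) → ℂ, Measurable f ∧ morreyNorm n q φ f < ⊤ ∧
        ¬ (f =ᵐ[volume] 0)) ↔
      (∃ C : ℝ, ∀ t, 0 < t → φ t * min (t ^ (-((n : ℝ) / q))) 1 ≤ C)) := by
  set g : (Fin n → ℝ) → ℂ := (closedBall (0 : Fin n → ℝ) 1).indicator (fun _ => (1:ℂ))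
    with hg
  have hgmeas : Measurable g := measurable_const.indicator measurableSet_closedBall
  have hgcs : HasCompactSupport g :=
    HasCompactSupport.intro (isCompact_closedBall _ _)
      (fun x hx => Set.indicator_of_notMem hx _)
  have hgbd1 : ∀ᵐ x ∂volume, ‖g x‖ ≤ 1 := by
    refine ae_of_all _ fun x => ?_
    by_cases h : x ∈ closedBall (0 : Fin n → ℝ) 1 <;>
      simp [hg, Set.indicator_of_mem, Set.indicator_of_notMem, h]
  have hgne : ¬ (g =ᵐ[volume] 0) := by
    intro hae
    have h0 : volume {x | g x ≠ 0} = 0 := by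
      rw [Filter.EventuallyEq, ae_iff] at hae
      simpa using hae
    have hsub : closedBall (0 : Fin n → ℝ) 1 ⊆ {x | g x ≠ 0} := fun x hx => by
      rw [mem_setOf_eq, hg, Set.indicator_of_mem hx]
      exact one_ne_zero
    exact (measure_closedBall_pos volume _ one_pos).ne' (measure_mono_null hsub h0)
  constructor
  · constructor
    · intro ha
      exact ⟨g, hgmeas, ha g hgmeas hgcs ⟨1, hgbd1⟩, hgne⟩
    · rintro ⟨f, hfm, hfM, hfne⟩ f' hf'm hf'cs ⟨D, hD⟩
      obtain ⟨C, hC⟩ := morrey_exists_bound n hq hφ0 hfm hfM hfne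
      exact morrey_lt_top_of_bound n hq hφ0 hC hf'm hf'cs hD
  · constructor
    · rintro ⟨f, hfm, hfM, hfne⟩
      exact morrey_exists_bound n hq hφ0 hfm hfM hfne
    · rintro ⟨C, hC⟩
      exact ⟨g, hgmeas, morrey_lt_top_of_bound n hq hφ0 hC hgmeas hgcs hgbd1, hgne⟩
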